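/- arXiv:1810.03750 — 2 statements merged into one kernel-verified Lean document; each statement's English description precedes it below -/
import Mathlib

section
/- Let G be a graph, let D be a set of vertices of G with x ∈ D, let 0 be a vertex of G, and let ω be a subgraph (a set of 'open' edges). Suppose z₁ and z₂ are vertices such that for i = 1, 2: (i) there is an open path from x to z_i using only vertices of D, and (ii) the edge e_i = {z_i, z_i'} is pivotal for the event that x is connected to 0 by an open path (i.e., every open path from x to 0 uses the edge e_i), where z_i' ∉ D. If x is connected to 0 by an open path, then z₁ = z₂. -/
private lemma edge_not_mem_of_support_subset {V : Type*} {ω : SimpleGraph V}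
    {D : Set V} {a b z z' : V} (w : ω.Walk a b) (hw : ∀ v ∈ w.support, v ∈ D)
    (hz' : z' ∉ D) : s(z, z') ∉ w.edges := fun h =>
  hz' (hw _ (w.snd_mem_support_of_mem_edges h))

/-- Deterministic 'at most one pivotal boundary vertex' claim: if `ω` is the open subgraph
of a graph `G`, `x ∈ D`, for `i = 1,2` there is an open path from `x` to `zᵢ` staying in `D`,
`zᵢ' ∉ D`, the edge `{zᵢ, zᵢ'}` is pivotal for `{x ↔ 0}` (every open walk from `x` to `o`
uses it), and `x` is connected to `o`, then `z₁ = z₂`. -/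
theorem stmt6 {V : Type*} (G ω : SimpleGraph V) (hω : ω ≤ G)
    (D : Set V) (x o z₁ z₂ z₁' z₂' : V)
    (hxD : x ∈ D)
    (h1 : ∃ p : ω.Walk x z₁, ∀ v ∈ p.support, v ∈ D)
    (h2 : ∃ p : ω.Walk x z₂, ∀ v ∈ p.support, v ∈ D)
    (h1' : z₁' ∉ D) (h2' : z₂' ∉ D)
    (hpiv1 : ∀ p : ω.Walk x o, s(z₁, z₁') ∈ p.edges)
    (hpiv2 : ∀ p : ω.Walk x o, s(z₂, z₂') ∈ p.edges)
    (hconn : ω.Reachable x o) :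
    z₁ = z₂ := by
  classical
  obtain ⟨w₁, hw₁⟩ := h1
  obtain ⟨w₂, hw₂⟩ := h2
  obtain ⟨p0⟩ := hconn
  set W : ω.Walk x o := (p0.toPath : ω.Walk x o) with hW
  have hWpath : W.IsPath := p0.toPath.2
  -- z₁ is in the support of W
  have hz₁W : z₁ ∈ W.support :=
    W.fst_mem_support_of_mem_edges (hpiv1 W)
  set r₁ : ω.Walk z₁ o := W.dropUntil z₁ hz₁W with hr₁
  have hr₁path : r₁.IsPath := hWpath.dropUntil hz₁W
  -- e₂ ∈ r₁.edges
  have he₂r₁ : s(z₂, z₂') ∈ r₁.edges := by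
    have h := hpiv2 (w₁.append r₁)
    rw [SimpleGraph.Walk.edges_append, List.mem_append] at h
    exact h.resolve_left (edge_not_mem_of_support_subset w₁ hw₁ h2')
  have hz₂r₁ : z₂ ∈ r₁.support := r₁.fst_mem_support_of_mem_edges he₂r₁
  -- e₁ ∈ (r₁.dropUntil z₂).edges
  have he₁ : s(z₁, z₁') ∈ (r₁.dropUntil z₂ hz₂r₁).edges := by
    have h := hpiv1 (w₂.append (r₁.dropUntil z₂ hz₂r₁))
    rw [SimpleGraph.Walk.edges_append, List.mem_append] at h
    exact h.resolve_left (edge_not_mem_of_support_subset w₂ hw₂ h1')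
  have hz₁drop : z₁ ∈ (r₁.dropUntil z₂ hz₂r₁).support :=
    (r₁.dropUntil z₂ hz₂r₁).fst_mem_support_of_mem_edges he₁
  -- conclude using nodup of r₁'s support
  by_contra hne
  have hspec := r₁.take_spec hz₂r₁
  have hnodup : r₁.support.Nodup := hr₁path.support_nodup
  rw [← hspec, SimpleGraph.Walk.support_append, List.nodup_append] at hnodup
  have hz₁take : z₁ ∈ (r₁.takeUntil z₂ hz₂r₁).support :=
    (r₁.takeUntil z₂ hz₂r₁).start_mem_support
  have hz₁tail : z₁ ∈ (r₁.dropUntil z₂ hz₂r₁).support.tail := by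
    have := (r₁.dropUntil z₂ hz₂r₁).support_eq_cons
    rw [this] at hz₁drop
    rcases List.mem_cons.mp hz₁drop with h | h
    · exact absurd h hne
    · rw [this]; exact h
  exact hnodup.2.2 _ hz₁take _ hz₁tail rfl
end

section
/- Fix d ≥ 9. There exists a constant C > 0 such that for all n ≥ 1, ∑_{x,y ∈ B(2n)} ∑_{z ∈ ℤ^d} ‖z‖^{1−d} ‖z−x‖^{2−d} ‖z−y‖^{2−d} ≤ C·n⁸, where all norms are ℓ∞ norms, with the convention ‖0‖^{a} = 1 for the terms where an argument vanishes. -/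
open scoped ENNReal

/-- `‖v‖∞^a` in `[0,∞]`, with the convention that the value at `v = 0` is `1`. -/
noncomputable def nrmPow (d : ℕ) (a : ℝ) (v : Fin d → ℤ) : ℝ≥0∞ :=
  if v = 0 then 1 else ENNReal.ofReal (‖v‖ ^ a)

open scoped NNReal
open Finset

namespace Stmt12

variable {d : ℕ}

noncomputable def box (d m : ℕ) : Finset (Fin d → ℤ) :=
  Finset.Icc (fun _ => -(m:ℤ)) (fun _ => (m:ℤ))

def natNorm {d : ℕ} (v : Fin d → ℤ) : ℕ := Finset.univ.sup fun i => (v i).natAbs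

lemma natNorm_zero : natNorm (0 : Fin d → ℤ) = 0 := by simp [natNorm]

lemma norm_eq_natNorm (v : Fin d → ℤ) : ‖v‖ = (natNorm v : ℝ) := by
  rw [Pi.norm_def, natNorm]
  have h1 : (Finset.univ.sup fun i => ‖v i‖₊) = Finset.univ.sup fun i => (((v i).natAbs : ℕ) : ℝ≥0) := by
    refine Finset.sup_congr rfl fun i _ => ?_
    exact (NNReal.natCast_natAbs _).symm
  have h2 : (Finset.univ.sup fun i => (((v i).natAbs : ℕ) : ℝ≥0))
      = ((Finset.univ.sup fun i => (v i).natAbs : ℕ) : ℝ≥0) := by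
    refine (Finset.comp_sup_eq_sup_comp (Nat.cast : ℕ → ℝ≥0) (fun x y => ?_) (by simp)).symm
    exact Nat.mono_cast.map_max
  rw [h1]
  norm_cast

lemma mem_box_iff {m : ℕ} {v : Fin d → ℤ} : v ∈ box d m ↔ natNorm v ≤ m := by
  simp only [box, Finset.mem_Icc, Pi.le_def, natNorm, Finset.sup_le_iff, Finset.mem_univ,
    true_imp_iff]
  constructor
  · rintro ⟨h1, h2⟩ i; have := h1 i; have := h2 i; omega
  · intro h
    constructor <;> intro i <;> have := h i <;> omega

lemma card_box (m : ℕ) : (box d m).card = (2*m+1)^d := by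
  rw [box, Pi.card_Icc]
  have h : ∀ i : Fin d, (Finset.Icc (-(m:ℤ)) (m:ℤ)).card = 2*m+1 := by
    intro i; rw [Int.card_Icc]; omega
  rw [Finset.prod_congr rfl fun i _ => h i, Finset.prod_const, Finset.card_univ, Fintype.card_fin]

lemma box_mono {m m' : ℕ} (h : m ≤ m') : box d m ⊆ box d m' := by
  intro v hv; rw [mem_box_iff] at *; omega

lemma subset_box (s : Finset (Fin d → ℤ)) : s ⊆ box d (s.sup natNorm) := by
  intro v hv; rw [mem_box_iff]; exact Finset.le_sup hv
lemma pow_succ_sub (b c e : ℕ) : (b+c)^(e+1) ≤ b^(e+1) + (e+1)*c*(b+c)^e := by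
  induction e with
  | zero => simp
  | succ e ih =>
    calc (b+c)^(e+2) = (b+c) * (b+c)^(e+1) := by ring
      _ ≤ (b+c) * (b^(e+1) + (e+1)*c*(b+c)^e) := Nat.mul_le_mul_left _ ih
      _ = b*b^(e+1) + c*b^(e+1) + (e+1)*c*((b+c)*(b+c)^e) := by ring
      _ = b^(e+2) + c*b^(e+1) + (e+1)*c*(b+c)^(e+1) := by ring
      _ ≤ b^(e+2) + c*(b+c)^(e+1) + (e+1)*c*(b+c)^(e+1) := by
            have h1 : b^(e+1) ≤ (b+c)^(e+1) := Nat.pow_le_pow_left (by omega) _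
            have h2 := Nat.mul_le_mul_left c h1
            omega
      _ = b^(e+2) + (e+2)*c*(b+c)^(e+1) := by ring

lemma shell_card_le {k : ℕ} (hk : 1 ≤ k) :
    (2*k+1)^d - (2*k-1)^d ≤ 2*d*(3*k)^(d-1) := by
  rcases Nat.eq_zero_or_pos d with hd | hd
  · simp [hd]
  · obtain ⟨e, rfl⟩ : ∃ e, d = e + 1 := ⟨d - 1, by omega⟩
    have hb : (2*k-1) + 2 = 2*k+1 := by omega
    have := pow_succ_sub (2*k-1) 2 e
    rw [hb] at this
    have h2 : (e+1)*2*(2*k+1)^e ≤ 2*(e+1)*(3*k)^((e+1)-1) := by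
      have h3 : (2*k+1) ≤ 3*k := by omega
      have h4 := Nat.pow_le_pow_left h3 e
      calc (e+1)*2*(2*k+1)^e = 2*(e+1)*(2*k+1)^e := by ring
        _ ≤ 2*(e+1)*(3*k)^e := Nat.mul_le_mul_left _ h4
        _ = 2*(e+1)*(3*k)^((e+1)-1) := by norm_num
    omega

/-- Shell decomposition bound for sums over boxes. -/
lemma sum_box_le (g : ℕ → ℝ≥0∞) (F : (Fin d → ℤ) → ℝ≥0∞)
    (hF : ∀ v, F v ≤ g (natNorm v)) (m : ℕ) :
    ∑ v ∈ box d m, F v ≤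
      g 0 + ∑ k ∈ Finset.Icc 1 m, (((2*k+1)^d - (2*k-1)^d : ℕ) : ℝ≥0∞) * g k := by
  induction m with
  | zero =>
    simp only [Finset.Icc_eq_empty_of_lt (by norm_num : (0:ℕ) < 1), Finset.sum_empty, add_zero]
    calc ∑ v ∈ box d 0, F v ≤ ∑ v ∈ box d 0, g 0 := by
          refine Finset.sum_le_sum fun v hv => ?_
          have : natNorm v = 0 := Nat.le_zero.mp (mem_box_iff.mp hv)
          simpa [this] using hF v
      _ = (box d 0).card • g 0 := (Finset.sum_const _)
      _ = g 0 := by rw [card_box]; simp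
  | succ m ih =>
    have hsub : box d m ⊆ box d (m+1) := box_mono (by omega)
    rw [← Finset.sum_sdiff hsub]
    have hcard : (box d (m+1) \ box d m).card = (2*(m+1)+1)^d - (2*(m+1)-1)^d := by
      rw [Finset.card_sdiff_of_subset hsub, card_box, card_box]
      congr 1
    have hstep : ∑ v ∈ box d (m+1) \ box d m, F v
        ≤ (((2*(m+1)+1)^d - (2*(m+1)-1)^d : ℕ) : ℝ≥0∞) * g (m+1) := by
      calc ∑ v ∈ box d (m+1) \ box d m, F v ≤ ∑ v ∈ box d (m+1) \ box d m, g (m+1) := by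
            refine Finset.sum_le_sum fun v hv => ?_
            rw [Finset.mem_sdiff, mem_box_iff, mem_box_iff] at hv
            have : natNorm v = m+1 := by omega
            simpa [this] using hF v
        _ = ((box d (m+1) \ box d m).card : ℝ≥0∞) * g (m+1) := by
            rw [Finset.sum_const, nsmul_eq_mul]
        _ = _ := by rw [hcard]
    rw [Finset.sum_Icc_succ_top (by omega : 1 ≤ m+1)]
    calc ∑ v ∈ box d (m+1) \ box d m, F v + ∑ v ∈ box d m, F v
        ≤ (((2*(m+1)+1)^d - (2*(m+1)-1)^d : ℕ) : ℝ≥0∞) * g (m+1)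
          + (g 0 + ∑ k ∈ Finset.Icc 1 m, (((2*k+1)^d - (2*k-1)^d : ℕ) : ℝ≥0∞) * g k) :=
          add_le_add hstep ih
      _ = _ := by ring

lemma sum_inv_sq_aux : ∀ m : ℕ, 1 ≤ m →
    ∑ k ∈ Finset.Icc 1 m, (((k:ℝ))^2)⁻¹ ≤ 2 - 1/(m:ℝ)
  | 0, h => by omega
  | 1, _ => by norm_num
  | (m+2), _ => by
    have ih := sum_inv_sq_aux (m+1) (by omega)
    rw [Finset.sum_Icc_succ_top (by omega : 1 ≤ m+2)]
    have hm : (0:ℝ) < (m+1 : ℕ) := by positivity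
    have key : (((m+2:ℕ):ℝ)^2)⁻¹ ≤ 1/((m+1:ℕ):ℝ) - 1/((m+2:ℕ):ℝ) := by
      push_cast
      rw [div_sub_div _ _ (by positivity) (by positivity)]
      rw [inv_eq_one_div]
      rw [div_le_div_iff₀ (by positivity) (by positivity)]
      ring_nf
      nlinarith [sq_nonneg ((m:ℝ))]
    have hsum := add_le_add ih key
    have hfix : ((m:ℝ)+1+1) = ((m+2:ℕ):ℝ) := by push_cast; ring
    rw [show m+1+1 = m+2 from rfl]
    linarith

lemma sum_inv_sq (m : ℕ) : ∑ k ∈ Finset.Icc 1 m, (((k:ℝ))^2)⁻¹ ≤ 2 := by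
  rcases Nat.eq_zero_or_pos m with h | h
  · simp [h]
  · have h1 := sum_inv_sq_aux m h
    have h2 : 0 < 1/(m:ℝ) := by positivity
    linarith
lemma natNorm_pos {v : Fin d → ℤ} (hv : v ≠ 0) : 1 ≤ natNorm v := by
  by_contra h
  push_neg at h
  apply hv
  funext i
  have h0 : natNorm v = 0 := by omega
  have : (v i).natAbs ≤ 0 := by
    calc (v i).natAbs ≤ natNorm v := Finset.le_sup (f := fun j => (v j).natAbs) (Finset.mem_univ i)
      _ = 0 := h0
  simpa using Int.natAbs_eq_zero.mp (by omega)

/-- The per-shell real estimate. -/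
lemma shell_real_bound (hd1 : 1 ≤ d) {k : ℕ} (hk : 1 ≤ k) (a : ℝ) :
    (((2*k+1)^d - (2*k-1)^d : ℕ) : ℝ) * (k:ℝ)^a
      ≤ (2*d*3^(d-1) : ℝ) * (k:ℝ)^(((d:ℝ)-1) + a) := by
  have hk0 : (0:ℝ) < (k:ℝ) := by positivity
  have hN : (((2*k+1)^d - (2*k-1)^d : ℕ) : ℝ) ≤ (2*d*3^(d-1) : ℝ) * (k:ℝ)^(d-1:ℕ) := by
    have := shell_card_le (d := d) hk
    calc (((2*k+1)^d - (2*k-1)^d : ℕ) : ℝ) ≤ ((2*d*(3*k)^(d-1) : ℕ) : ℝ) := by exact_mod_cast this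
      _ = (2*d*3^(d-1) : ℝ) * (k:ℝ)^(d-1:ℕ) := by push_cast [mul_pow]; ring
  have hpow : (k:ℝ)^(d-1:ℕ) * (k:ℝ)^a = (k:ℝ)^(((d:ℝ)-1) + a) := by
    rw [← Real.rpow_natCast (k:ℝ) (d-1), ← Real.rpow_add hk0]
    congr 1
    push_cast [Nat.cast_sub hd1]
    ring
  calc (((2*k+1)^d - (2*k-1)^d : ℕ) : ℝ) * (k:ℝ)^a
      ≤ ((2*d*3^(d-1) : ℝ) * (k:ℝ)^(d-1:ℕ)) * (k:ℝ)^a := by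
        exact mul_le_mul_of_nonneg_right hN (Real.rpow_nonneg hk0.le a)
    _ = (2*d*3^(d-1) : ℝ) * ((k:ℝ)^(d-1:ℕ) * (k:ℝ)^a) := by ring
    _ = _ := by rw [hpow]

/-- Sum of `nrmPow a` over a box, for `a ≤ 2 - d`. -/
lemma sum_nrmPow_box_le (hd1 : 1 ≤ d) (a : ℝ) (ha : (d:ℝ) - 1 + a ≤ 1)
    (m : ℕ) (hm : 1 ≤ m) :
    ∑ v ∈ box d m, nrmPow d a v
      ≤ ENNReal.ofReal ((1 + 2*d*3^(d-1)) * (m:ℝ)^2) := by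
  have hc0 : (0:ℝ) ≤ 2*d*3^(d-1) := by positivity
  have key := sum_box_le (d := d)
    (fun k => if k = 0 then 1 else ENNReal.ofReal ((k:ℝ)^a)) (nrmPow d a)
    (fun v => by
      by_cases hv : v = 0
      · subst hv; simp [nrmPow, natNorm_zero]
      · have h1 : natNorm v ≠ 0 := by have := natNorm_pos hv; omega
        simp only [nrmPow, if_neg hv, if_neg h1, norm_eq_natNorm]
        exact le_refl _) m
  refine key.trans ?_
  have hterm : ∀ k ∈ Finset.Icc 1 m,
      (((2*k+1)^d - (2*k-1)^d : ℕ) : ℝ≥0∞) *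
        (if k = 0 then 1 else ENNReal.ofReal ((k:ℝ)^a))
      ≤ ENNReal.ofReal ((2*d*3^(d-1) : ℝ) * m) := by
    intro k hk
    rw [Finset.mem_Icc] at hk
    rw [if_neg (by omega)]
    rw [← ENNReal.ofReal_natCast, ← ENNReal.ofReal_mul (by positivity)]
    apply ENNReal.ofReal_le_ofReal
    refine (shell_real_bound hd1 hk.1 a).trans ?_
    have hk0 : (1:ℝ) ≤ (k:ℝ) := by exact_mod_cast hk.1
    have h1 : (k:ℝ)^(((d:ℝ)-1) + a) ≤ (k:ℝ)^(1:ℝ) :=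
      Real.rpow_le_rpow_of_exponent_le hk0 ha
    have h2 : (k:ℝ) ≤ (m:ℝ) := by exact_mod_cast hk.2
    rw [Real.rpow_one] at h1
    have := h1.trans h2
    exact mul_le_mul_of_nonneg_left this hc0
  calc (if (0:ℕ) = 0 then (1:ℝ≥0∞) else ENNReal.ofReal ((0:ℝ)^a))
        + ∑ k ∈ Finset.Icc 1 m, (((2*k+1)^d - (2*k-1)^d : ℕ) : ℝ≥0∞) *
            (if k = 0 then 1 else ENNReal.ofReal ((k:ℝ)^a))
      ≤ 1 + ∑ k ∈ Finset.Icc 1 m, ENNReal.ofReal ((2*d*3^(d-1) : ℝ) * m) := by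
        rw [if_pos rfl]
        exact add_le_add le_rfl (Finset.sum_le_sum hterm)
    _ = 1 + (m : ℝ≥0∞) * ENNReal.ofReal ((2*d*3^(d-1) : ℝ) * m) := by
        rw [Finset.sum_const, Nat.card_Icc, nsmul_eq_mul]
        norm_num
    _ = ENNReal.ofReal (1 + (2*d*3^(d-1) : ℝ) * m * m) := by
        rw [← ENNReal.ofReal_natCast, ← ENNReal.ofReal_mul (by positivity),
          ← ENNReal.ofReal_one, ← ENNReal.ofReal_add (by norm_num) (by positivity)]
        ring_nf
    _ ≤ ENNReal.ofReal ((1 + 2*d*3^(d-1)) * (m:ℝ)^2) := by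
        apply ENNReal.ofReal_le_ofReal
        have hm1 : (1:ℝ) ≤ (m:ℝ) := by exact_mod_cast hm
        nlinarith
/-- Tail estimate: sum of `‖z‖^b` outside the box of radius `M`. -/
lemma tail_le (hd1 : 1 ≤ d) (b : ℝ) (hb : (d:ℝ) + 1 + b ≤ 0) (M : ℕ) (hM : 1 ≤ M) :
    (∑' z : Fin d → ℤ, (if z ∈ box d M then 0 else ENNReal.ofReal (‖z‖^b)))
      ≤ ENNReal.ofReal ((4*d*3^(d-1)) * (M:ℝ)^((d:ℝ)+1+b)) := by
  have hM0 : (0:ℝ) < (M:ℝ) := by positivity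
  have hMb : (0:ℝ) ≤ (M:ℝ)^((d:ℝ)+1+b) := Real.rpow_nonneg hM0.le _
  have hc0 : (0:ℝ) ≤ 2*d*3^(d-1) := by positivity
  rw [ENNReal.tsum_eq_iSup_sum]
  apply iSup_le
  intro s
  set m := s.sup natNorm with hm
  have hsub : s ⊆ box d m := subset_box s
  refine le_trans (Finset.sum_le_sum_of_subset hsub) ?_
  have key := sum_box_le (d := d)
    (fun k => if k ≤ M then 0 else ENNReal.ofReal ((k:ℝ)^b))
    (fun z => if z ∈ box d M then 0 else ENNReal.ofReal (‖z‖^b))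
    (fun v => by
      by_cases hv : natNorm v ≤ M
      · rw [if_pos (mem_box_iff.mpr hv), if_pos hv]
      · have hv0 : v ≠ 0 := by
          intro h; subst h; rw [natNorm_zero] at hv; omega
        rw [if_neg (fun h => hv (mem_box_iff.mp h)), if_neg hv, norm_eq_natNorm]) m
  refine key.trans ?_
  rw [if_pos (by omega : 0 ≤ M), zero_add]
  have hterm : ∀ k ∈ Finset.Icc 1 m,
      (((2*k+1)^d - (2*k-1)^d : ℕ) : ℝ≥0∞) *
        (if k ≤ M then 0 else ENNReal.ofReal ((k:ℝ)^b))
      ≤ ENNReal.ofReal ((2*d*3^(d-1) : ℝ) * (M:ℝ)^((d:ℝ)+1+b) * (((k:ℝ))^2)⁻¹) := by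
    intro k hk
    rw [Finset.mem_Icc] at hk
    by_cases hkM : k ≤ M
    · rw [if_pos hkM, mul_zero]
      exact zero_le
    · rw [if_neg hkM]
      push_neg at hkM
      have hk1 : (1:ℝ) ≤ (k:ℝ) := by exact_mod_cast hk.1
      have hk0 : (0:ℝ) < (k:ℝ) := by linarith
      rw [← ENNReal.ofReal_natCast, ← ENNReal.ofReal_mul (by positivity)]
      apply ENNReal.ofReal_le_ofReal
      refine (shell_real_bound hd1 hk.1 b).trans ?_
      have hsplit : (k:ℝ)^(((d:ℝ)-1) + b) = (((k:ℝ))^2)⁻¹ * (k:ℝ)^((d:ℝ)+1+b) := by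
        rw [show ((d:ℝ)-1) + b = (-2) + ((d:ℝ)+1+b) by ring, Real.rpow_add hk0]
        congr 1
        rw [Real.rpow_neg hk0.le, Real.rpow_two]
      rw [hsplit]
      have hmono : (k:ℝ)^((d:ℝ)+1+b) ≤ (M:ℝ)^((d:ℝ)+1+b) := by
        apply Real.rpow_le_rpow_of_nonpos hM0 (by exact_mod_cast hkM.le) hb
      calc (2*d*3^(d-1) : ℝ) * ((((k:ℝ))^2)⁻¹ * (k:ℝ)^((d:ℝ)+1+b))
          ≤ (2*d*3^(d-1) : ℝ) * ((((k:ℝ))^2)⁻¹ * (M:ℝ)^((d:ℝ)+1+b)) := by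
            apply mul_le_mul_of_nonneg_left _ hc0
            exact mul_le_mul_of_nonneg_left hmono (by positivity)
        _ = (2*d*3^(d-1) : ℝ) * (M:ℝ)^((d:ℝ)+1+b) * (((k:ℝ))^2)⁻¹ := by ring
  calc ∑ k ∈ Finset.Icc 1 m, (((2*k+1)^d - (2*k-1)^d : ℕ) : ℝ≥0∞) *
          (if k ≤ M then 0 else ENNReal.ofReal ((k:ℝ)^b))
      ≤ ∑ k ∈ Finset.Icc 1 m,
          ENNReal.ofReal ((2*d*3^(d-1) : ℝ) * (M:ℝ)^((d:ℝ)+1+b) * (((k:ℝ))^2)⁻¹) :=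
        Finset.sum_le_sum hterm
    _ = ENNReal.ofReal (∑ k ∈ Finset.Icc 1 m,
          (2*d*3^(d-1) : ℝ) * (M:ℝ)^((d:ℝ)+1+b) * (((k:ℝ))^2)⁻¹) := by
        rw [ENNReal.ofReal_sum_of_nonneg (fun k hk =>
          mul_nonneg (mul_nonneg hc0 hMb) (by positivity))]
    _ ≤ ENNReal.ofReal ((4*d*3^(d-1)) * (M:ℝ)^((d:ℝ)+1+b)) := by
        apply ENNReal.ofReal_le_ofReal
        rw [← Finset.mul_sum]
        have h2 := sum_inv_sq m
        have hA : (0:ℝ) ≤ 2*d*3^(d-1) * (M:ℝ)^((d:ℝ)+1+b) := mul_nonneg hc0 hMb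
        nlinarith [mul_le_mul_of_nonneg_left h2 hA]
lemma natAbs_le_natNorm {v : Fin d → ℤ} (i : Fin d) : (v i).natAbs ≤ natNorm v :=
  Finset.le_sup (f := fun j => (v j).natAbs) (Finset.mem_univ i)

lemma natNorm_sub_le (z x : Fin d → ℤ) : natNorm (z - x) ≤ natNorm z + natNorm x := by
  refine Finset.sup_le fun i _ => ?_
  have h1 := Int.natAbs_sub_le (z i) (x i)
  have h2 := natAbs_le_natNorm (v := z) i
  have h3 := natAbs_le_natNorm (v := x) i
  simpa using le_trans (by simpa using h1) (by omega)

lemma natNorm_le_sub_add (hd0 : 0 < d) (z x : Fin d → ℤ) :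
    natNorm z ≤ natNorm (z - x) + natNorm x := by
  have hne : (Finset.univ : Finset (Fin d)).Nonempty := ⟨⟨0, hd0⟩, Finset.mem_univ _⟩
  obtain ⟨i, -, hi⟩ := Finset.exists_mem_eq_sup Finset.univ hne (fun j => (z j).natAbs)
  have h1 : (z i).natAbs ≤ ((z - x) i).natAbs + (x i).natAbs := by
    have := Int.natAbs_sub_le (z i - x i) (-(x i))
    simp only [sub_neg_eq_add, sub_add_cancel] at this
    simpa [Int.natAbs_neg] using this
  have h2 := natAbs_le_natNorm (v := z - x) i
  have h3 := natAbs_le_natNorm (v := x) i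
  have : natNorm z = (z i).natAbs := hi
  omega

lemma nrmPow_mono_exp {a a' : ℝ} (h : a ≤ a') (v : Fin d → ℤ) :
    nrmPow d a v ≤ nrmPow d a' v := by
  by_cases hv : v = 0
  · subst hv; simp [nrmPow]
  · have h1 : (1:ℝ) ≤ ‖v‖ := by
      rw [norm_eq_natNorm]
      exact_mod_cast natNorm_pos hv
    simp only [nrmPow, if_neg hv]
    exact ENNReal.ofReal_le_ofReal (Real.rpow_le_rpow_of_exponent_le h1 h)

lemma sum_translate (a : ℝ) (z : Fin d → ℤ) {p q : ℕ} (hz : natNorm z ≤ p) :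
    ∑ x ∈ box d q, nrmPow d a (z - x) ≤ ∑ w ∈ box d (p+q), nrmPow d a w := by
  have hinj : ∀ x ∈ box d q, ∀ y ∈ box d q, z - x = z - y → x = y := by
    intro x _ y _ h
    have := congrArg (fun w => z - w) h
    simpa using sub_right_injective h
  rw [← Finset.sum_image hinj]
  apply Finset.sum_le_sum_of_subset
  intro w hw
  rw [Finset.mem_image] at hw
  obtain ⟨x, hx, rfl⟩ := hw
  rw [mem_box_iff]
  have h1 := natNorm_sub_le z x
  have h2 := mem_box_iff.mp hx
  omega
lemma far_pointwise (hd : 9 ≤ d) {n : ℕ} {x z : Fin d → ℤ}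
    (hx : x ∈ box d (2*n)) (hz : z ∉ box d (4*n)) :
    nrmPow d (2 - (d:ℝ)) (z - x)
      ≤ ENNReal.ofReal ((2:ℝ)^((d:ℝ)-2) * ‖z‖^(2-(d:ℝ))) := by
  have hd0 : 0 < d := by omega
  have hdr : (9:ℝ) ≤ (d:ℝ) := by exact_mod_cast hd
  have hzn : 4*n < natNorm z := by
    by_contra h; exact hz (mem_box_iff.mpr (by omega))
  have hxn : natNorm x ≤ 2*n := mem_box_iff.mp hx
  have hsub := natNorm_le_sub_add hd0 z x
  have hzx0 : z - x ≠ 0 := by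
    intro h
    have : natNorm (z - x) = 0 := by rw [h, natNorm_zero]
    omega
  have hz0 : z ≠ 0 := by
    intro h; rw [h, natNorm_zero] at hzn; omega
  have ht : (0:ℝ) < ‖z‖ := by
    rw [norm_eq_natNorm]
    exact_mod_cast (by omega : 0 < natNorm z)
  have hkey : ‖z‖/2 ≤ ‖z - x‖ := by
    rw [norm_eq_natNorm, norm_eq_natNorm]
    have h2 : natNorm z ≤ 2 * natNorm (z - x) := by omega
    have := (Nat.cast_le (α := ℝ)).mpr h2
    push_cast at this ⊢
    linarith
  simp only [nrmPow, if_neg hzx0]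
  apply ENNReal.ofReal_le_ofReal
  have h1 : ‖z - x‖^(2-(d:ℝ)) ≤ (‖z‖/2)^(2-(d:ℝ)) :=
    Real.rpow_le_rpow_of_nonpos (by positivity) hkey (by linarith)
  refine h1.trans (le_of_eq ?_)
  rw [div_eq_mul_inv, Real.mul_rpow ht.le (by positivity),
    Real.inv_rpow (by norm_num : (0:ℝ) ≤ 2), ← Real.rpow_neg (by norm_num : (0:ℝ) ≤ 2),
    show -(2-(d:ℝ)) = (d:ℝ)-2 by ring]
  ring
end Stmt12


open Stmt12

/-- For `d ≥ 9` there is `C > 0` such that for all `n ≥ 1`,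
`∑_{x,y ∈ B(2n)} ∑_{z ∈ ℤ^d} ‖z‖^{1−d} ‖z−x‖^{2−d} ‖z−y‖^{2−d} ≤ C n⁸`
(ℓ∞ norms, with `‖0‖^a = 1`). -/
theorem stmt12 (d : ℕ) (hd : 9 ≤ d) :
    ∃ C : ℝ, 0 < C ∧ ∀ n : ℕ, 1 ≤ n →
      (∑ x ∈ (Finset.Icc (fun _ => -(2 * n : ℤ)) (fun _ => (2 * n : ℤ)) :
            Finset (Fin d → ℤ)),
        ∑ y ∈ (Finset.Icc (fun _ => -(2 * n : ℤ)) (fun _ => (2 * n : ℤ)) :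
            Finset (Fin d → ℤ)),
          ∑' z : Fin d → ℤ,
            nrmPow d (1 - (d : ℝ)) z * nrmPow d (2 - (d : ℝ)) (z - x) *
              nrmPow d (2 - (d : ℝ)) (z - y)) ≤
        ENNReal.ofReal (C * (n : ℝ) ^ 8) := by
  classical
  have hd1 : 1 ≤ d := by omega
  have hdr : (9:ℝ) ≤ (d:ℝ) := by exact_mod_cast hd
  set c1 : ℝ := 1 + 2*(d:ℝ)*3^(d-1) with hc1def
  set K : ℝ := (2:ℝ)^((d:ℝ)-2) with hKdef
  have hc1 : (0:ℝ) < c1 := by rw [hc1def]; positivity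
  have hK : (0:ℝ) < K := Real.rpow_pos_of_pos (by norm_num) _
  refine ⟨(36*c1)^3 + (5:ℝ)^(2*d)*K^2*(4*(d:ℝ)*3^(d-1)), by positivity, ?_⟩
  intro n hn
  have hn0 : (0:ℝ) < (n:ℝ) := by exact_mod_cast n.pos_of_ne_zero (by omega)
  have hn1 : (1:ℝ) ≤ (n:ℝ) := by exact_mod_cast hn
  have hbox : (Finset.Icc (fun _ => -(2 * n : ℤ)) (fun _ => (2 * n : ℤ)) :
      Finset (Fin d → ℤ)) = box d (2*n) := by
    unfold Stmt12.box; push_cast; rfl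
  rw [hbox]
  set B2 := box d (2*n)
  set B4 := box d (4*n)
  set a1 : ℝ := 1 - (d:ℝ)
  set a2 : ℝ := 2 - (d:ℝ)
  set b : ℝ := 5 - 3*(d:ℝ) with hbdef
  -- split each tsum into near and far parts
  have tsum_split : ∀ T : (Fin d → ℤ) → ℝ≥0∞,
      ∑' z, T z = ∑ z ∈ B4, T z + ∑' z, (if z ∈ B4 then 0 else T z) := by
    intro T
    calc ∑' z, T z
        = ∑' z, ((if z ∈ B4 then T z else 0) + (if z ∈ B4 then 0 else T z)) := by
          refine tsum_congr fun z => ?_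
          split_ifs <;> simp
      _ = (∑' z, (if z ∈ B4 then T z else 0)) + ∑' z, (if z ∈ B4 then 0 else T z) :=
          ENNReal.tsum_add
      _ = _ := by
          congr 1
          rw [tsum_eq_sum (s := B4) (fun z hz => if_neg hz)]
          exact Finset.sum_congr rfl fun z hz => if_pos hz
  have C2def : True := trivial
  set C2 : ℝ≥0∞ := ENNReal.ofReal (c1 * ((6*n : ℕ):ℝ)^2) with hC2def
  -- x-sum bound for near part
  have hSx : ∀ z ∈ B4, ∑ x ∈ B2, nrmPow d a2 (z - x) ≤ C2 := by
    intro z hz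
    refine (sum_translate a2 z (p := 4*n) (q := 2*n) (mem_box_iff.mp hz)).trans ?_
    rw [show 4*n+2*n = 6*n by ring]
    refine (sum_nrmPow_box_le hd1 a2 (by rw [show a2 = 2 - (d:ℝ) from rfl]; linarith)
      (6*n) (by omega)).trans ?_
    rw [hC2def, hc1def]
  -- near part
  have hnear : ∑ x ∈ B2, ∑ y ∈ B2, ∑ z ∈ B4,
      (nrmPow d a1 z * nrmPow d a2 (z - x) * nrmPow d a2 (z - y))
      ≤ ENNReal.ofReal ((36*c1)^3 * (n:ℝ)^6) := by
    have swap1 : ∑ x ∈ B2, ∑ y ∈ B2, ∑ z ∈ B4,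
        (nrmPow d a1 z * nrmPow d a2 (z - x) * nrmPow d a2 (z - y))
        = ∑ z ∈ B4, ∑ x ∈ B2, ∑ y ∈ B2,
        (nrmPow d a1 z * nrmPow d a2 (z - x) * nrmPow d a2 (z - y)) := by
      calc ∑ x ∈ B2, ∑ y ∈ B2, ∑ z ∈ B4,
            (nrmPow d a1 z * nrmPow d a2 (z - x) * nrmPow d a2 (z - y))
          = ∑ x ∈ B2, ∑ z ∈ B4, ∑ y ∈ B2,
            (nrmPow d a1 z * nrmPow d a2 (z - x) * nrmPow d a2 (z - y)) :=
            Finset.sum_congr rfl fun x _ => Finset.sum_comm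
        _ = _ := Finset.sum_comm
    rw [swap1]
    have hfact : ∀ z ∈ B4, ∑ x ∈ B2, ∑ y ∈ B2,
        (nrmPow d a1 z * nrmPow d a2 (z - x) * nrmPow d a2 (z - y))
        = nrmPow d a1 z * (∑ x ∈ B2, nrmPow d a2 (z - x)) *
          (∑ y ∈ B2, nrmPow d a2 (z - y)) := by
      intro z _
      simp only [Finset.mul_sum, Finset.sum_mul, mul_assoc]
      exact Finset.sum_comm
    rw [Finset.sum_congr rfl hfact]
    have hterm : ∀ z ∈ B4,
        nrmPow d a1 z * (∑ x ∈ B2, nrmPow d a2 (z - x)) *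
          (∑ y ∈ B2, nrmPow d a2 (z - y)) ≤ nrmPow d a2 z * C2 * C2 := by
      intro z hz
      have h1 : nrmPow d a1 z ≤ nrmPow d a2 z :=
        nrmPow_mono_exp (by rw [show a1 = 1-(d:ℝ) from rfl, show a2 = 2-(d:ℝ) from rfl]; linarith) z
      exact mul_le_mul' (mul_le_mul' h1 (hSx z hz)) (hSx z hz)
    refine (Finset.sum_le_sum hterm).trans ?_
    rw [← Finset.sum_mul, ← Finset.sum_mul]
    have hz2 : ∑ z ∈ B4, nrmPow d a2 z ≤ C2 := by
      refine (Finset.sum_le_sum_of_subset (box_mono (by omega : 4*n ≤ 6*n))).trans ?_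
      refine (sum_nrmPow_box_le hd1 a2 (by rw [show a2 = 2 - (d:ℝ) from rfl]; linarith)
        (6*n) (by omega)).trans ?_
      rw [hC2def, hc1def]
    calc (∑ z ∈ B4, nrmPow d a2 z) * C2 * C2 ≤ C2 * C2 * C2 := by
          exact mul_le_mul' (mul_le_mul' hz2 le_rfl) le_rfl
      _ = ENNReal.ofReal ((c1 * ((6*n : ℕ):ℝ)^2)^3) := by
          rw [hC2def, ← ENNReal.ofReal_mul (by positivity), ← ENNReal.ofReal_mul (by positivity)]
          congr 1
          ring
      _ ≤ ENNReal.ofReal ((36*c1)^3 * (n:ℝ)^6) := by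
          apply ENNReal.ofReal_le_ofReal
          apply le_of_eq
          push_cast
          ring
  -- far part
  have hfarptw : ∀ x ∈ B2, ∀ y ∈ B2, ∀ z : Fin d → ℤ,
      (if z ∈ B4 then 0 else
        nrmPow d a1 z * nrmPow d a2 (z - x) * nrmPow d a2 (z - y))
      ≤ ENNReal.ofReal (K^2) * (if z ∈ B4 then 0 else ENNReal.ofReal (‖z‖^b)) := by
    intro x hx y hy z
    by_cases hz : z ∈ B4
    · simp [hz]
    · rw [if_neg hz, if_neg hz]
      have hz0 : z ≠ 0 := by
        intro h
        apply hz
        rw [h, mem_box_iff, natNorm_zero]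
        omega
      have ht : (0:ℝ) < ‖z‖ := by
        rw [norm_eq_natNorm]
        have := natNorm_pos hz0
        exact_mod_cast (by omega : 0 < natNorm z)
      have h1 : nrmPow d a1 z = ENNReal.ofReal (‖z‖^a1) := by
        rw [nrmPow, if_neg hz0]
      have h2 := far_pointwise hd hx hz
      have h3 := far_pointwise hd hy hz
      calc nrmPow d a1 z * nrmPow d a2 (z - x) * nrmPow d a2 (z - y)
          ≤ ENNReal.ofReal (‖z‖^a1) * ENNReal.ofReal (K * ‖z‖^a2) *
            ENNReal.ofReal (K * ‖z‖^a2) := by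
            rw [h1]
            exact mul_le_mul' (mul_le_mul' le_rfl h2) h3
        _ = ENNReal.ofReal (K^2) * ENNReal.ofReal (‖z‖^b) := by
            rw [← ENNReal.ofReal_mul (by positivity), ← ENNReal.ofReal_mul (by positivity),
              ← ENNReal.ofReal_mul (by positivity)]
            congr 1
            have : ‖z‖^a1 * ‖z‖^a2 * ‖z‖^a2 = ‖z‖^b := by
              rw [← Real.rpow_add ht, ← Real.rpow_add ht]
              congr 1
              rw [show a1 = 1-(d:ℝ) from rfl, show a2 = 2-(d:ℝ) from rfl, hbdef]
              ring
            nlinarith [this, Real.rpow_nonneg ht.le a1, Real.rpow_nonneg ht.le a2,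
              Real.rpow_nonneg ht.le b, hK]
  have htail := tail_le hd1 b (by rw [hbdef]; linarith) (4*n) (by omega)
  have hfar : ∑ x ∈ B2, ∑ y ∈ B2, (∑' z, (if z ∈ B4 then 0 else
      nrmPow d a1 z * nrmPow d a2 (z - x) * nrmPow d a2 (z - y)))
      ≤ ENNReal.ofReal ((5:ℝ)^(2*d)*K^2*(4*(d:ℝ)*3^(d-1)) * (n:ℝ)^6) := by
    have hxy : ∀ x ∈ B2, ∀ y ∈ B2, (∑' z, (if z ∈ B4 then 0 else
        nrmPow d a1 z * nrmPow d a2 (z - x) * nrmPow d a2 (z - y)))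
        ≤ ENNReal.ofReal (K^2) *
          ENNReal.ofReal ((4*(d:ℝ)*3^(d-1)) * ((4*n:ℕ):ℝ)^((d:ℝ)+1+b)) := by
      intro x hx y hy
      calc (∑' z, (if z ∈ B4 then 0 else
            nrmPow d a1 z * nrmPow d a2 (z - x) * nrmPow d a2 (z - y)))
          ≤ ∑' z, (ENNReal.ofReal (K^2) * (if z ∈ B4 then 0 else ENNReal.ofReal (‖z‖^b))) :=
            ENNReal.tsum_le_tsum (fun z => hfarptw x hx y hy z)
        _ = ENNReal.ofReal (K^2) * ∑' z, (if z ∈ B4 then 0 else ENNReal.ofReal (‖z‖^b)) :=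
            ENNReal.tsum_mul_left
        _ ≤ _ := mul_le_mul' le_rfl htail
    calc ∑ x ∈ B2, ∑ y ∈ B2, (∑' z, (if z ∈ B4 then 0 else
          nrmPow d a1 z * nrmPow d a2 (z - x) * nrmPow d a2 (z - y)))
        ≤ ∑ x ∈ B2, ∑ y ∈ B2, (ENNReal.ofReal (K^2) *
            ENNReal.ofReal ((4*(d:ℝ)*3^(d-1)) * ((4*n:ℕ):ℝ)^((d:ℝ)+1+b))) := by
          refine Finset.sum_le_sum fun x hx => Finset.sum_le_sum fun y hy => hxy x hx y hy
      _ = (B2.card : ℝ≥0∞) * ((B2.card : ℝ≥0∞) *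
            (ENNReal.ofReal (K^2) *
             ENNReal.ofReal ((4*(d:ℝ)*3^(d-1)) * ((4*n:ℕ):ℝ)^((d:ℝ)+1+b)))) := by
          rw [Finset.sum_const, Finset.sum_const, nsmul_eq_mul, nsmul_eq_mul]
      _ ≤ ENNReal.ofReal ((5:ℝ)^(2*d)*K^2*(4*(d:ℝ)*3^(d-1)) * (n:ℝ)^6) := by
          have hcard : (B2.card : ℝ≥0∞) = ENNReal.ofReal (((4*n+1:ℕ):ℝ)^d) := by
            rw [show B2.card = (2*(2*n)+1)^d from card_box (2*n), ← ENNReal.ofReal_natCast]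
            congr 1
            push_cast
            ring
          rw [hcard, ← ENNReal.ofReal_mul (by positivity), ← ENNReal.ofReal_mul (by positivity),
            ← ENNReal.ofReal_mul (by positivity)]
          apply ENNReal.ofReal_le_ofReal
          -- real arithmetic
          have hM0 : (0:ℝ) < ((4*n:ℕ):ℝ) := by positivity
          have he : ((4*n:ℕ):ℝ)^((d:ℝ)+1+b) ≤ (n:ℝ)^((d:ℝ)+1+b) := by
            apply Real.rpow_le_rpow_of_nonpos hn0 (by push_cast; linarith) (by rw [hbdef]; linarith)
          have hb2 : ((4*n+1:ℕ):ℝ)^d ≤ (5*(n:ℝ))^d := by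
            apply pow_le_pow_left₀ (by positivity)
            push_cast
            linarith
          have hkey : (n:ℝ)^d * (n:ℝ)^d * (n:ℝ)^((d:ℝ)+1+b) = (n:ℝ)^6 := by
            rw [← Real.rpow_natCast (n:ℝ) d, ← Real.rpow_add hn0, ← Real.rpow_add hn0,
              ← Real.rpow_natCast (n:ℝ) 6]
            congr 1
            rw [hbdef]
            push_cast
            ring
          calc ((4*n+1:ℕ):ℝ)^d * (((4*n+1:ℕ):ℝ)^d *
                (K^2 * ((4*(d:ℝ)*3^(d-1)) * ((4*n:ℕ):ℝ)^((d:ℝ)+1+b))))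
              ≤ (5*(n:ℝ))^d * ((5*(n:ℝ))^d *
                (K^2 * ((4*(d:ℝ)*3^(d-1)) * (n:ℝ)^((d:ℝ)+1+b)))) := by
                have hKn : (0:ℝ) ≤ K^2 := sq_nonneg K
                have hcn : (0:ℝ) ≤ 4*(d:ℝ)*3^(d-1) := by positivity
                gcongr
            _ = (5:ℝ)^(2*d)*K^2*(4*(d:ℝ)*3^(d-1)) * ((n:ℝ)^d * (n:ℝ)^d * (n:ℝ)^((d:ℝ)+1+b)) := by
                rw [mul_pow, two_mul, pow_add]
                ring
            _ = (5:ℝ)^(2*d)*K^2*(4*(d:ℝ)*3^(d-1)) * (n:ℝ)^6 := by rw [hkey]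
  -- assemble
  calc ∑ x ∈ B2, ∑ y ∈ B2, ∑' z : Fin d → ℤ,
        nrmPow d (1 - (d : ℝ)) z * nrmPow d (2 - (d : ℝ)) (z - x) *
          nrmPow d (2 - (d : ℝ)) (z - y)
      = (∑ x ∈ B2, ∑ y ∈ B2, ∑ z ∈ B4,
          (nrmPow d a1 z * nrmPow d a2 (z - x) * nrmPow d a2 (z - y)))
        + ∑ x ∈ B2, ∑ y ∈ B2, (∑' z, (if z ∈ B4 then 0 else
          nrmPow d a1 z * nrmPow d a2 (z - x) * nrmPow d a2 (z - y))) := by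
        rw [← Finset.sum_add_distrib]
        refine Finset.sum_congr rfl fun x _ => ?_
        rw [← Finset.sum_add_distrib]
        exact Finset.sum_congr rfl fun y _ => tsum_split _
    _ ≤ ENNReal.ofReal ((36*c1)^3 * (n:ℝ)^6)
        + ENNReal.ofReal ((5:ℝ)^(2*d)*K^2*(4*(d:ℝ)*3^(d-1)) * (n:ℝ)^6) :=
        add_le_add hnear hfar
    _ = ENNReal.ofReal (((36*c1)^3 + (5:ℝ)^(2*d)*K^2*(4*(d:ℝ)*3^(d-1))) * (n:ℝ)^6) := by
        rw [← ENNReal.ofReal_add (by positivity) (by positivity)]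
        ring_nf
    _ ≤ ENNReal.ofReal (((36*c1)^3 + (5:ℝ)^(2*d)*K^2*(4*(d:ℝ)*3^(d-1))) * (n:ℝ)^8) := by
        apply ENNReal.ofReal_le_ofReal
        have : (n:ℝ)^6 ≤ (n:ℝ)^8 := pow_le_pow_right₀ hn1 (by omega)
        have hCpos : (0:ℝ) ≤ (36*c1)^3 + (5:ℝ)^(2*d)*K^2*(4*(d:ℝ)*3^(d-1)) := by positivity
        nlinarith
end
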